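/- Let (Ω, ℱ, P) be a probability space, and let Y : Ω → ℝ, U : Ω → ℝ, D : Ω → 𝒟, X : Ω → 𝒳, Z : Ω → 𝒵 be measurable random elements (𝒟, 𝒳, 𝒵 measurable spaces). Let q : ℝ × 𝒟 × 𝒳 → ℝ be measurable and suppose that for every d ∈ 𝒟 and x ∈ 𝒳 the map t ↦ q(t, d, x) is strictly increasing on [0,1]. Assume Y = q(U, D, X) P-a.s., U ∈ [0,1] P-a.s., and for every t ∈ [0,1], E[1{U ≤ t} | σ(X, Z)] = t P-a.s. Then for each τ ∈ (0,1), E[1{Y ≤ q(τ, D, X)} | σ(X, Z)] = τ P-almost surely. -/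
import Mathlib


open MeasureTheory

/-- Theorem 1(ii) of the IVQR model: if `Y = q(U, D, X)` a.s. with `U` uniform on `(0,1)`
conditionally on `(X, Z)` and `t ↦ q(t, d, x)` strictly increasing on `[0,1]`, then the
conditional moment restriction `P[Y ≤ q(τ, D, X) | X, Z] = τ` holds for each `τ ∈ (0,1)`. -/
theorem ivqr_conditional_moment_restriction
    {Ω 𝒟 𝒳 𝒵 : Type*} [MeasurableSpace Ω] [MeasurableSpace 𝒟] [MeasurableSpace 𝒳]
    [MeasurableSpace 𝒵]
    (P : Measure Ω) [IsProbabilityMeasure P]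
    (Y U : Ω → ℝ) (D : Ω → 𝒟) (X : Ω → 𝒳) (Z : Ω → 𝒵)
    (hY : Measurable Y) (hU : Measurable U) (hD : Measurable D)
    (hX : Measurable X) (hZ : Measurable Z)
    (q : ℝ → 𝒟 → 𝒳 → ℝ) (hq : Measurable fun p : ℝ × 𝒟 × 𝒳 => q p.1 p.2.1 p.2.2)
    (hmono : ∀ (d : 𝒟) (x : 𝒳), StrictMonoOn (fun t => q t d x) (Set.Icc (0 : ℝ) 1))
    (hrep : ∀ᵐ ω ∂P, Y ω = q (U ω) (D ω) (X ω))
    (hU01 : ∀ᵐ ω ∂P, U ω ∈ Set.Icc (0 : ℝ) 1)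
    (hunif : ∀ t ∈ Set.Icc (0 : ℝ) 1,
      P[(fun ω => if U ω ≤ t then (1 : ℝ) else 0)
          | MeasurableSpace.comap (fun ω => (X ω, Z ω)) inferInstance] =ᵐ[P] fun _ => t)
    (τ : ℝ) (hτ : τ ∈ Set.Ioo (0 : ℝ) 1) :
    P[(fun ω => if Y ω ≤ q τ (D ω) (X ω) then (1 : ℝ) else 0)
        | MeasurableSpace.comap (fun ω => (X ω, Z ω)) inferInstance] =ᵐ[P] fun _ => τ := by
  have hτ' : τ ∈ Set.Icc (0 : ℝ) 1 := ⟨hτ.1.le, hτ.2.le⟩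
  have heq : (fun ω => if Y ω ≤ q τ (D ω) (X ω) then (1 : ℝ) else 0)
      =ᵐ[P] (fun ω => if U ω ≤ τ then (1 : ℝ) else 0) := by
    filter_upwards [hrep, hU01] with ω h1 h2
    simp only [h1, (hmono (D ω) (X ω)).le_iff_le h2 hτ']
  exact (condExp_congr_ae heq).trans (hunif τ hτ')
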